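/- Suppose the pair (A,B) is controllable, the data matrices satisfy the noise-free consistency relation X₊ = AX + BU, and the system is (Q,S,R)-dissipative. Then there exists a symmetric matrix P ∈ ℝ^{n×n} such that M(P) ⪯ 0 (negative semidefinite). (Equivalently: if no symmetric P with M(P) ⪯ 0 exists, then the controllable system generating the data is not (Q,S,R)-dissipative.) -/

import Mathlib

open Matrix

/-- `M ⪯ 0`: a real matrix is negative semidefinite iff `-M` is positive semidefinite. -/
def Matrix.NegSemidef {k : Type*} [Fintype k] (M : Matrix k k ℝ) : Prop :=
  (-M).PosSemidef

/-- Quadratic supply rate `s(u,y) = uᵀRu + uᵀSᵀy + yᵀSu + yᵀQy`. -/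
noncomputable def supplyRate {m p : ℕ} (R : Matrix (Fin m) (Fin m) ℝ)
    (S : Matrix (Fin p) (Fin m) ℝ) (Q : Matrix (Fin p) (Fin p) ℝ)
    (u : Fin m → ℝ) (y : Fin p → ℝ) : ℝ :=
  u ⬝ᵥ R.mulVec u + u ⬝ᵥ Sᵀ.mulVec y + y ⬝ᵥ S.mulVec u + y ⬝ᵥ Q.mulVec y

/-- The dissipation matrix `K(P)`. -/
noncomputable def dissipationMatrix {n m p : ℕ}
    (A : Matrix (Fin n) (Fin n) ℝ) (B : Matrix (Fin n) (Fin m) ℝ)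
    (C : Matrix (Fin p) (Fin n) ℝ) (D : Matrix (Fin p) (Fin m) ℝ)
    (R : Matrix (Fin m) (Fin m) ℝ) (S : Matrix (Fin p) (Fin m) ℝ)
    (Q : Matrix (Fin p) (Fin p) ℝ)
    (P : Matrix (Fin n) (Fin n) ℝ) : Matrix (Fin n ⊕ Fin m) (Fin n ⊕ Fin m) ℝ :=
  Matrix.fromBlocks
    (Aᵀ * P * A - P - Cᵀ * Q * C)
    (Aᵀ * P * B - (Cᵀ * S + Cᵀ * Q * D))
    (Aᵀ * P * B - (Cᵀ * S + Cᵀ * Q * D))ᵀ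
    (Bᵀ * P * B - (Dᵀ * Q * D + Dᵀ * S + Sᵀ * D + R))

/-- The data-dependent matrix `M(P)`. -/
noncomputable def dataMatrixM {n m p N : ℕ}
    (C : Matrix (Fin p) (Fin n) ℝ) (D : Matrix (Fin p) (Fin m) ℝ)
    (R : Matrix (Fin m) (Fin m) ℝ) (S : Matrix (Fin p) (Fin m) ℝ)
    (Q : Matrix (Fin p) (Fin p) ℝ)
    (X Xp : Matrix (Fin n) (Fin N) ℝ) (U : Matrix (Fin m) (Fin N) ℝ)
    (P : Matrix (Fin n) (Fin n) ℝ) : Matrix (Fin N) (Fin N) ℝ :=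
  Xpᵀ * P * Xp - Xᵀ * P * X -
    (Uᵀ * R * U + Uᵀ * Sᵀ * (C * X + D * U) + (C * X + D * U)ᵀ * S * U
      + (C * X + D * U)ᵀ * Q * (C * X + D * U))

/-- The controllability matrix `[B, AB, …, A^{n−1}B]`, with columns indexed by
`Fin n × Fin m` (column `(j, k)` is the `k`-th column of `A^j * B`). -/
noncomputable def controllabilityMatrix {n m : ℕ}
    (A : Matrix (Fin n) (Fin n) ℝ) (B : Matrix (Fin n) (Fin m) ℝ) :
    Matrix (Fin n) (Fin n × Fin m) ℝ :=
  Matrix.of fun i jk => (A ^ (jk.1 : ℕ) * B) i jk.2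



namespace DissipProof

variable {n m p : ℕ}

/-- State trajectory from initial state `x` under input `u`. -/
noncomputable def trajFrom (A : Matrix (Fin n) (Fin n) ℝ) (B : Matrix (Fin n) (Fin m) ℝ)
    (x : Fin n → ℝ) (u : ℕ → Fin m → ℝ) : ℕ → Fin n → ℝ
  | 0 => x
  | (k+1) => A.mulVec (trajFrom A B x u k) + B.mulVec (u k)

/-- Accumulated supply along a trajectory. -/
noncomputable def costFrom (A : Matrix (Fin n) (Fin n) ℝ) (B : Matrix (Fin n) (Fin m) ℝ)
    (C : Matrix (Fin p) (Fin n) ℝ) (D : Matrix (Fin p) (Fin m) ℝ)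
    (R : Matrix (Fin m) (Fin m) ℝ) (S : Matrix (Fin p) (Fin m) ℝ)
    (Q : Matrix (Fin p) (Fin p) ℝ)
    (x : Fin n → ℝ) (u : ℕ → Fin m → ℝ) (T : ℕ) : ℝ :=
  ∑ i ∈ Finset.range T,
    supplyRate R S Q (u i) (C.mulVec (trajFrom A B x u i) + D.mulVec (u i))

variable (A : Matrix (Fin n) (Fin n) ℝ) (B : Matrix (Fin n) (Fin m) ℝ)
  (C : Matrix (Fin p) (Fin n) ℝ) (D : Matrix (Fin p) (Fin m) ℝ)
  (R : Matrix (Fin m) (Fin m) ℝ) (S : Matrix (Fin p) (Fin m) ℝ)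
  (Q : Matrix (Fin p) (Fin p) ℝ)

lemma supplyRate_para (u u' : Fin m → ℝ) (y y' : Fin p → ℝ) :
    supplyRate R S Q (u + u') (y + y') + supplyRate R S Q (u - u') (y - y')
      = 2 * supplyRate R S Q u y + 2 * supplyRate R S Q u' y' := by
  simp only [supplyRate, Matrix.mulVec_add, Matrix.mulVec_sub, dotProduct_add,
    dotProduct_sub, add_dotProduct, sub_dotProduct]
  ring

lemma supplyRate_smul (c : ℝ) (u : Fin m → ℝ) (y : Fin p → ℝ) :
    supplyRate R S Q (c • u) (c • y) = c ^ 2 * supplyRate R S Q u y := by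
  simp only [supplyRate, Matrix.mulVec_smul, dotProduct_smul, smul_dotProduct,
    smul_eq_mul]
  ring

lemma supplyRate_zero : supplyRate R S Q 0 0 = 0 := by
  simp [supplyRate]

lemma trajFrom_succ (x : Fin n → ℝ) (u : ℕ → Fin m → ℝ) (k : ℕ) :
    trajFrom A B x u (k+1) = A.mulVec (trajFrom A B x u k) + B.mulVec (u k) := rfl

lemma trajFrom_add (x x' : Fin n → ℝ) (u u' : ℕ → Fin m → ℝ) (k : ℕ) :
    trajFrom A B (x + x') (fun i => u i + u' i) k = trajFrom A B x u k + trajFrom A B x' u' k := by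
  induction k with
  | zero => rfl
  | succ k ih => simp [trajFrom_succ, ih, Matrix.mulVec_add]; abel

lemma trajFrom_sub (x x' : Fin n → ℝ) (u u' : ℕ → Fin m → ℝ) (k : ℕ) :
    trajFrom A B (x - x') (fun i => u i - u' i) k = trajFrom A B x u k - trajFrom A B x' u' k := by
  induction k with
  | zero => rfl
  | succ k ih => simp [trajFrom_succ, ih, Matrix.mulVec_sub]; abel

lemma trajFrom_smul (c : ℝ) (x : Fin n → ℝ) (u : ℕ → Fin m → ℝ) (k : ℕ) :
    trajFrom A B (c • x) (fun i => c • u i) k = c • trajFrom A B x u k := by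
  induction k with
  | zero => rfl
  | succ k ih => simp [trajFrom_succ, ih, Matrix.mulVec_smul]

lemma costFrom_para (x x' : Fin n → ℝ) (u u' : ℕ → Fin m → ℝ) (T : ℕ) :
    costFrom A B C D R S Q (x + x') (fun i => u i + u' i) T
      + costFrom A B C D R S Q (x - x') (fun i => u i - u' i) T
      = 2 * costFrom A B C D R S Q x u T + 2 * costFrom A B C D R S Q x' u' T := by
  simp only [costFrom, ← Finset.sum_add_distrib, Finset.mul_sum]
  refine Finset.sum_congr rfl fun i _ => ?_
  rw [trajFrom_add, trajFrom_sub]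
  have h1 : C.mulVec (trajFrom A B x u i + trajFrom A B x' u' i)
      + D.mulVec (u i + u' i)
      = (C.mulVec (trajFrom A B x u i) + D.mulVec (u i))
        + (C.mulVec (trajFrom A B x' u' i) + D.mulVec (u' i)) := by
    simp [Matrix.mulVec_add]; abel
  have h2 : C.mulVec (trajFrom A B x u i - trajFrom A B x' u' i)
      + D.mulVec (u i - u' i)
      = (C.mulVec (trajFrom A B x u i) + D.mulVec (u i))
        - (C.mulVec (trajFrom A B x' u' i) + D.mulVec (u' i)) := by
    simp [Matrix.mulVec_sub]; abel
  rw [h1, h2, supplyRate_para]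

lemma costFrom_smul (c : ℝ) (x : Fin n → ℝ) (u : ℕ → Fin m → ℝ) (T : ℕ) :
    costFrom A B C D R S Q (c • x) (fun i => c • u i) T
      = c ^ 2 * costFrom A B C D R S Q x u T := by
  simp only [costFrom, Finset.mul_sum]
  refine Finset.sum_congr rfl fun i _ => ?_
  rw [trajFrom_smul]
  have h1 : C.mulVec (c • trajFrom A B x u i) + D.mulVec (c • u i)
      = c • (C.mulVec (trajFrom A B x u i) + D.mulVec (u i)) := by
    simp [Matrix.mulVec_smul]
  rw [h1, supplyRate_smul]

end DissipProof

namespace DissipProof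

variable {n m p : ℕ}
variable (A : Matrix (Fin n) (Fin n) ℝ) (B : Matrix (Fin n) (Fin m) ℝ)
  (C : Matrix (Fin p) (Fin n) ℝ) (D : Matrix (Fin p) (Fin m) ℝ)
  (R : Matrix (Fin m) (Fin m) ℝ) (S : Matrix (Fin p) (Fin m) ℝ)
  (Q : Matrix (Fin p) (Fin p) ℝ)

lemma trajFrom_congr (x : Fin n → ℝ) {u v : ℕ → Fin m → ℝ} {k : ℕ}
    (h : ∀ i < k, u i = v i) : trajFrom A B x u k = trajFrom A B x v k := by
  induction k with
  | zero => rfl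
  | succ k ih =>
    rw [trajFrom_succ, trajFrom_succ, ih (fun i hi => h i (Nat.lt_succ_of_lt hi)),
      h k (Nat.lt_succ_self k)]

lemma costFrom_congr (x : Fin n → ℝ) {u v : ℕ → Fin m → ℝ} {T : ℕ}
    (h : ∀ i < T, u i = v i) :
    costFrom A B C D R S Q x u T = costFrom A B C D R S Q x v T := by
  refine Finset.sum_congr rfl fun i hi => ?_
  have hi' := Finset.mem_range.mp hi
  rw [trajFrom_congr A B x (fun j hj => h j (hj.trans hi')), h i hi']

/-- Concatenation of an input of length `T` with a continuation input. -/
def cat (u : ℕ → Fin m → ℝ) (T : ℕ) (w : ℕ → Fin m → ℝ) : ℕ → Fin m → ℝ :=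
  fun k => if k < T then u k else w (k - T)

lemma trajFrom_cat (x : Fin n → ℝ) (u w : ℕ → Fin m → ℝ) (T j : ℕ) :
    trajFrom A B x (cat u T w) (T + j) = trajFrom A B (trajFrom A B x u T) w j := by
  induction j with
  | zero =>
    exact trajFrom_congr A B x (fun i hi => by
      simp only [cat]; exact if_pos (by omega))
  | succ j ih =>
    have : T + (j+1) = (T + j) + 1 := rfl
    rw [this, trajFrom_succ, ih, trajFrom_succ]
    congr 1
    simp [cat, Nat.add_sub_cancel_left]

lemma costFrom_cat (x : Fin n → ℝ) (u w : ℕ → Fin m → ℝ) (T T' : ℕ) :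
    costFrom A B C D R S Q x (cat u T w) (T + T')
      = costFrom A B C D R S Q x u T
        + costFrom A B C D R S Q (trajFrom A B x u T) w T' := by
  induction T' with
  | zero =>
    simp only [Nat.add_zero, costFrom, Finset.range_zero, Finset.sum_empty, add_zero]
    exact costFrom_congr A B C D R S Q x (fun i hi => by
      simp only [cat]; exact if_pos (by omega))
  | succ T' ih =>
    have h1 : T + (T'+1) = (T + T') + 1 := rfl
    have h2 : cat u T w (T + T') = w T' := by simp [cat, Nat.add_sub_cancel_left]
    have h3 : costFrom A B C D R S Q (trajFrom A B x u T) w (T'+1)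
        = costFrom A B C D R S Q (trajFrom A B x u T) w T'
          + supplyRate R S Q (w T')
              (C.mulVec (trajFrom A B (trajFrom A B x u T) w T') + D.mulVec (w T')) := by
      rw [costFrom, Finset.sum_range_succ, ← costFrom]
    have h4 : costFrom A B C D R S Q x (cat u T w) ((T + T') + 1)
        = costFrom A B C D R S Q x (cat u T w) (T + T')
          + supplyRate R S Q (cat u T w (T + T'))
              (C.mulVec (trajFrom A B x (cat u T w) (T + T')) + D.mulVec (cat u T w (T + T'))) := by
      rw [costFrom, Finset.sum_range_succ, ← costFrom]
    rw [h1, h4, ih, h3, h2, trajFrom_cat, add_assoc]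

lemma trajFrom_zero_input (k : ℕ) :
    trajFrom A B (0 : Fin n → ℝ) (fun _ => (0 : Fin m → ℝ)) k = 0 := by
  have := trajFrom_smul A B (0:ℝ) 0 (fun _ => (0 : Fin m → ℝ)) k
  simpa using this

lemma costFrom_zero_input (T : ℕ) :
    costFrom A B C D R S Q (0 : Fin n → ℝ) (fun _ => (0 : Fin m → ℝ)) T = 0 := by
  have := costFrom_smul A B C D R S Q (0:ℝ) 0 (fun _ => (0 : Fin m → ℝ)) T
  simpa using this

/-- Padding an input with `T₀` initial zeros. -/
lemma pad_spec (u : ℕ → Fin m → ℝ) (T T₀ : ℕ) :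
    trajFrom A B (0 : Fin n → ℝ) (cat (fun _ => 0) T₀ u) (T₀ + T)
        = trajFrom A B 0 u T
      ∧ costFrom A B C D R S Q (0 : Fin n → ℝ) (cat (fun _ => 0) T₀ u) (T₀ + T)
        = costFrom A B C D R S Q 0 u T := by
  constructor
  · rw [trajFrom_cat, trajFrom_zero_input]
  · rw [costFrom_cat, trajFrom_zero_input, costFrom_zero_input, zero_add]

lemma trajFrom_state_split (x : Fin n → ℝ) (u : ℕ → Fin m → ℝ) (k : ℕ) :
    trajFrom A B x u k = (A ^ k).mulVec x + trajFrom A B 0 u k := by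
  induction k with
  | zero => simp [trajFrom]
  | succ k ih =>
    rw [trajFrom_succ, trajFrom_succ, ih, Matrix.mulVec_add, Matrix.mulVec_mulVec,
      pow_succ']
    abel

lemma trajFrom_zero_eq_sum (u : ℕ → Fin m → ℝ) (T : ℕ) :
    trajFrom A B (0 : Fin n → ℝ) u T
      = ∑ i ∈ Finset.range T, (A ^ (T - 1 - i)).mulVec (B.mulVec (u i)) := by
  induction T with
  | zero => simp [trajFrom]
  | succ T ih =>
    rw [trajFrom_succ, ih, Finset.sum_range_succ]
    have hA : A.mulVec (∑ i ∈ Finset.range T, (A ^ (T - 1 - i)).mulVec (B.mulVec (u i)))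
        = ∑ i ∈ Finset.range T, (A ^ (T + 1 - 1 - i)).mulVec (B.mulVec (u i)) := by
      rw [show A.mulVec = A.mulVecLin from rfl, map_sum]
      refine Finset.sum_congr rfl fun i hi => ?_
      have hi' := Finset.mem_range.mp hi
      simp only [Matrix.mulVecLin_apply, Matrix.mulVec_mulVec]
      rw [← Matrix.mul_assoc, ← pow_succ']
      have : T - 1 - i + 1 = T + 1 - 1 - i := by omega
      rw [this]
    rw [hA]
    congr 1
    simp

end DissipProof

namespace DissipProof

variable {n m p : ℕ}
variable (A : Matrix (Fin n) (Fin n) ℝ) (B : Matrix (Fin n) (Fin m) ℝ)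
  (C : Matrix (Fin p) (Fin n) ℝ) (D : Matrix (Fin p) (Fin m) ℝ)
  (R : Matrix (Fin m) (Fin m) ℝ) (S : Matrix (Fin p) (Fin m) ℝ)
  (Q : Matrix (Fin p) (Fin p) ℝ)

/-- Input built from a coefficient vector for the controllability matrix. -/
def inputOf (c : Fin n × Fin m → ℝ) : ℕ → Fin m → ℝ :=
  fun i k => if h : i < n then c (⟨n - 1 - i, by omega⟩, k) else 0

lemma trajFrom_inputOf (c : Fin n × Fin m → ℝ) :
    trajFrom A B 0 (inputOf c) n = (controllabilityMatrix A B).mulVec c := by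
  rw [trajFrom_zero_eq_sum]
  have hR : (controllabilityMatrix A B).mulVec c
      = ∑ j : Fin n, (A ^ (j : ℕ)).mulVec (B.mulVec (fun k => c (j, k))) := by
    ext r
    simp only [Matrix.mulVec, dotProduct, controllabilityMatrix, Matrix.of_apply,
      Fintype.sum_prod_type, Finset.sum_apply, Matrix.mul_apply, Finset.sum_mul,
      Finset.mul_sum]
    refine Finset.sum_congr rfl fun j _ => ?_
    simp [mul_assoc]
    rw [Finset.sum_comm]
  rw [hR]
  rw [Finset.sum_range fun i => (A ^ (n - 1 - i)).mulVec (B.mulVec (inputOf c i))]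
  refine (Fintype.sum_bijective Fin.rev Fin.rev_bijective _ _ fun i => ?_)
  have h1 : ((Fin.rev i : Fin n) : ℕ) = n - 1 - (i : ℕ) := by
    simp [Fin.rev]; omega
  have h2 : inputOf c (i : ℕ) = fun k => c (i.rev, k) := by
    funext k
    simp only [inputOf]
    rw [dif_pos i.isLt]
    congr 2
    exact Fin.ext (by rw [h1])
  rw [h2, h1]

lemma exists_rightInv (hctrb : (controllabilityMatrix A B).rank = n) :
    ∃ g : (Fin n → ℝ) →ₗ[ℝ] (Fin n × Fin m → ℝ),
      ∀ t, (controllabilityMatrix A B).mulVec (g t) = t := by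
  have hsurj : LinearMap.range (controllabilityMatrix A B).mulVecLin = ⊤ := by
    apply Submodule.eq_top_of_finrank_eq
    rw [← Matrix.rank, hctrb, Module.finrank_pi]
    simp
  obtain ⟨g, hg⟩ := (controllabilityMatrix A B).mulVecLin.exists_rightInverse_of_surjective hsurj
  refine ⟨g, fun t => ?_⟩
  have := LinearMap.congr_fun hg t
  simpa [Matrix.mulVecLin_apply] using this

section Continuity

lemma continuous_dot {α : Type*} [TopologicalSpace α] {ι : Type*} [Fintype ι]
    {f g : α → ι → ℝ} (hf : Continuous f) (hg : Continuous g) :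
    Continuous fun a => f a ⬝ᵥ g a := by
  simp only [dotProduct]
  exact continuous_finset_sum _ fun i _ =>
    ((continuous_apply i).comp hf).mul ((continuous_apply i).comp hg)

lemma continuous_mulVec {α : Type*} [TopologicalSpace α] {ι κ : Type*} [Fintype ι] [Fintype κ]
    (M : Matrix κ ι ℝ) {f : α → ι → ℝ} (hf : Continuous f) :
    Continuous fun a => M.mulVec (f a) := by
  refine continuous_pi fun r => ?_
  exact continuous_dot continuous_const hf

lemma continuous_supplyRate {α : Type*} [TopologicalSpace α]
    {f : α → Fin m → ℝ} {g : α → Fin p → ℝ} (hf : Continuous f) (hg : Continuous g) :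
    Continuous fun a => supplyRate R S Q (f a) (g a) := by
  simp only [supplyRate]
  exact (((continuous_dot hf (continuous_mulVec R hf)).add
    (continuous_dot hf (continuous_mulVec Sᵀ hg))).add
    (continuous_dot hg (continuous_mulVec S hf))).add
    (continuous_dot hg (continuous_mulVec Q hg))

lemma continuous_trajFrom {α : Type*} [TopologicalSpace α]
    {x : α → Fin n → ℝ} {u : α → ℕ → Fin m → ℝ} (hx : Continuous x)
    (hu : ∀ i, Continuous fun a => u a i) (k : ℕ) :
    Continuous fun a => trajFrom A B (x a) (u a) k := by
  induction k with
  | zero => exact hx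
  | succ k ih =>
    simp only [trajFrom_succ]
    exact (continuous_mulVec A ih).add (continuous_mulVec B (hu k))

lemma continuous_costFrom {α : Type*} [TopologicalSpace α]
    {x : α → Fin n → ℝ} {u : α → ℕ → Fin m → ℝ} (hx : Continuous x)
    (hu : ∀ i, Continuous fun a => u a i) (T : ℕ) :
    Continuous fun a => costFrom A B C D R S Q (x a) (u a) T := by
  simp only [costFrom]
  refine continuous_finset_sum _ fun i _ => ?_
  exact continuous_supplyRate R S Q (hu i)
    ((continuous_mulVec C (continuous_trajFrom A B hx hu i)).add (continuous_mulVec D (hu i)))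

end Continuity

end DissipProof

namespace DissipProof

lemma additive_bounded_linear (h : ℝ → ℝ) (hadd : ∀ a b, h (a + b) = h a + h b)
    (M : ℝ) (hb : ∀ t : ℝ, |t| ≤ 1 → |h t| ≤ M) : ∀ t, h t = t * h 1 := by
  have h0 : h 0 = 0 := by
    have := hadd 0 0; simp at this; linarith
  have hnat : ∀ (k : ℕ) (t : ℝ), h (k * t) = k * h t := by
    intro k
    induction k with
    | zero => intro t; simp [h0]
    | succ k ih =>
      intro t
      have : ((k:ℝ) + 1) * t = k * t + t := by ring
      push_cast
      rw [this, hadd, ih]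
      ring
  have hneg : ∀ t, h (-t) = -h t := by
    intro t
    have := hadd t (-t); simp [h0] at this; linarith
  have hint : ∀ (k : ℤ) (t : ℝ), h (k * t) = k * h t := by
    intro k t
    rcases le_or_gt 0 k with hk | hk
    · lift k to ℕ using hk
      exact_mod_cast hnat k t
    · have hk' : 0 ≤ -k := by omega
      lift -k to ℕ using hk' with j hj
      have : (k : ℝ) * t = -(j * t) := by
        have : (j : ℤ) = -k := hj
        have : (j : ℝ) = -(k : ℝ) := by exact_mod_cast this
        rw [this]; ring
      rw [this, hneg, hnat]
      have : (j : ℝ) = -(k : ℝ) := by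
        have : (j : ℤ) = -k := hj
        exact_mod_cast this
      rw [this]; ring
  have hrat : ∀ q : ℚ, h (q : ℝ) = (q : ℝ) * h 1 := by
    intro q
    have hden : (q.den : ℝ) ≠ 0 := by
      exact_mod_cast q.den_nz
    have h1 : (q.den : ℝ) * (q : ℝ) = (q.num : ℝ) := by
      rw [Rat.cast_def]
      field_simp
    have h2 : h ((q.den : ℝ) * (q : ℝ)) = (q.den : ℝ) * h (q : ℝ) := hnat q.den _
    have h3 : h ((q.num : ℝ)) = (q.num : ℝ) * h 1 := by
      have := hint q.num 1
      simpa using this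
    rw [h1, h3] at h2
    have h5 : h (q:ℝ) = (q.num : ℝ) * h 1 / (q.den : ℝ) := by
      rw [eq_div_iff hden]
      linear_combination -h2
    rw [h5, Rat.cast_def]
    ring
  intro t
  have key : ∀ k : ℕ, 1 ≤ k → |h t - t * h 1| ≤ (M + |h 1|) / k := by
    intro k hk
    have hkpos : (0:ℝ) < k := by exact_mod_cast hk
    have hlt : t - 1/(k:ℝ) < t := by
      have : (0:ℝ) < 1/(k:ℝ) := by positivity
      linarith
    obtain ⟨q, hq1, hq2⟩ := exists_rat_btwn hlt
    have hqt : |t - (q:ℝ)| ≤ 1 / k := by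
      rw [abs_le]; constructor <;> [linarith; linarith]
    have split : h t = h (t - q) + (q : ℝ) * h 1 := by
      have := hadd (t - q) q
      have e : t - (q:ℝ) + q = t := by ring
      rw [e] at this
      rw [this, hrat]
    have hb1 : |h (t - q)| ≤ M / k := by
      have e : (k : ℝ) * (t - q) = k * (t - q) := rfl
      have habs : |(k:ℝ) * (t - q)| ≤ 1 := by
        rw [abs_mul, abs_of_pos hkpos]
        calc (k:ℝ) * |t - (q:ℝ)| ≤ k * (1/k) := by
              exact mul_le_mul_of_nonneg_left hqt (le_of_lt hkpos)
          _ = 1 := by field_simp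
      have := hb _ habs
      rw [hnat] at this
      rw [abs_mul, abs_of_pos hkpos] at this
      rw [le_div_iff₀ hkpos]
      linarith
    calc |h t - t * h 1| = |h (t - q) + ((q:ℝ) - t) * h 1| := by
          rw [split]; ring_nf
      _ ≤ |h (t - q)| + |(q:ℝ) - t| * |h 1| := by
          refine (abs_add_le _ _).trans ?_
          rw [abs_mul]
      _ ≤ M / k + (1/k) * |h 1| := by
          have : |(q:ℝ) - t| ≤ 1/k := by rw [abs_sub_comm]; exact hqt
          gcongr
      _ = (M + |h 1|) / k := by ring
  by_contra hne
  have hpos : 0 < |h t - t * h 1| := by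
    rcases abs_pos.mpr (sub_ne_zero.mpr hne) with h'
    exact h'
  obtain ⟨k, hk⟩ := exists_nat_gt ((M + |h 1|) / |h t - t * h 1|)
  have hk1 : 1 ≤ k := by
    by_contra hc
    push_neg at hc
    interval_cases k
    · simp at hk
      have hM : 0 ≤ M := le_trans (abs_nonneg _) (hb 0 (by simp))
      have := div_nonneg (by positivity : (0:ℝ) ≤ M + |h 1|) (le_of_lt hpos)
      linarith
  have := key k hk1
  have hkpos : (0:ℝ) < k := by exact_mod_cast hk1
  rw [div_lt_iff₀ hpos] at hk
  rw [le_div_iff₀ hkpos] at this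
  nlinarith
end DissipProof

namespace DissipProof

variable {n m p : ℕ}

/-- Costs of trajectories steering the origin to `x`. -/
def costSet (A : Matrix (Fin n) (Fin n) ℝ) (B : Matrix (Fin n) (Fin m) ℝ)
    (C : Matrix (Fin p) (Fin n) ℝ) (D : Matrix (Fin p) (Fin m) ℝ)
    (R : Matrix (Fin m) (Fin m) ℝ) (S : Matrix (Fin p) (Fin m) ℝ)
    (Q : Matrix (Fin p) (Fin p) ℝ) (x : Fin n → ℝ) : Set ℝ :=
  {c | ∃ T u, trajFrom A B 0 u T = x ∧ costFrom A B C D R S Q 0 u T = c}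

/-- The required supply. -/
noncomputable def Vr (A : Matrix (Fin n) (Fin n) ℝ) (B : Matrix (Fin n) (Fin m) ℝ)
    (C : Matrix (Fin p) (Fin n) ℝ) (D : Matrix (Fin p) (Fin m) ℝ)
    (R : Matrix (Fin m) (Fin m) ℝ) (S : Matrix (Fin p) (Fin m) ℝ)
    (Q : Matrix (Fin p) (Fin p) ℝ) (x : Fin n → ℝ) : ℝ :=
  sInf (costSet A B C D R S Q x)

lemma exists_storage_matrix
    (A : Matrix (Fin n) (Fin n) ℝ) (B : Matrix (Fin n) (Fin m) ℝ)
    (C : Matrix (Fin p) (Fin n) ℝ) (D : Matrix (Fin p) (Fin m) ℝ)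
    (R : Matrix (Fin m) (Fin m) ℝ) (S : Matrix (Fin p) (Fin m) ℝ)
    (Q : Matrix (Fin p) (Fin p) ℝ)
    (hctrb : (controllabilityMatrix A B).rank = n)
    (V : (Fin n → ℝ) → ℝ)
    (hV : ∀ (u : ℕ → Fin m → ℝ) (x : ℕ → Fin n → ℝ),
        (∀ k : ℕ, x (k + 1) = A.mulVec (x k) + B.mulVec (u k)) →
        ∀ k₂ k₁ : ℕ, k₂ < k₁ →
          V (x k₁) - V (x k₂)
            ≤ ∑ i ∈ Finset.Ico k₂ k₁,
                supplyRate R S Q (u i) (C.mulVec (x i) + D.mulVec (u i))) :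
    ∃ P : Matrix (Fin n) (Fin n) ℝ, P.IsSymm ∧
      ∀ (x : Fin n → ℝ) (u₀ : Fin m → ℝ),
        (A.mulVec x + B.mulVec u₀) ⬝ᵥ P.mulVec (A.mulVec x + B.mulVec u₀)
          ≤ x ⬝ᵥ P.mulVec x + supplyRate R S Q u₀ (C.mulVec x + D.mulVec u₀) := by
  obtain ⟨g, hg⟩ := exists_rightInv A B hctrb
  set W : (Fin n → ℝ) → ℝ := Vr A B C D R S Q with hW
  -- basic facts about costSet
  have hmem : ∀ (T : ℕ) (u : ℕ → Fin m → ℝ),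
      costFrom A B C D R S Q 0 u T ∈ costSet A B C D R S Q (trajFrom A B 0 u T) :=
    fun T u => ⟨T, u, rfl, rfl⟩
  have hlb : ∀ z, ∀ c ∈ costSet A B C D R S Q z, V z - V 0 ≤ c := by
    intro z c hc
    obtain ⟨T, u, htraj, hcost⟩ := hc
    rcases Nat.eq_zero_or_pos T with hT | hT
    · subst hT
      have hz : z = 0 := htraj.symm
      have hc0 : c = 0 := by
        rw [← hcost]; simp [costFrom]
      rw [hz, hc0]; simp
    · have := hV u (trajFrom A B 0 u) (fun k => rfl) 0 T hT
      rw [← Finset.range_eq_Ico] at this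
      rw [htraj] at this
      simp only [trajFrom] at this
      rw [← hcost]
      exact this
  have hne : ∀ z, (costSet A B C D R S Q z).Nonempty := by
    intro z
    refine ⟨costFrom A B C D R S Q 0 (inputOf (g z)) n, n, inputOf (g z), ?_, rfl⟩
    rw [trajFrom_inputOf, hg]
  have hbdd : ∀ z, BddBelow (costSet A B C D R S Q z) :=
    fun z => ⟨V z - V 0, fun c hc => hlb z c hc⟩
  have W_le : ∀ z, ∀ c ∈ costSet A B C D R S Q z, W z ≤ c :=
    fun z c hc => csInf_le (hbdd z) hc
  have le_W : ∀ z b, (∀ c ∈ costSet A B C D R S Q z, b ≤ c) → b ≤ W z :=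
    fun z b hb => le_csInf (hne z) hb
  -- W 0 = 0
  have W_zero : W 0 = 0 := by
    have h1 : W 0 ≤ 0 := by
      have : (0:ℝ) ∈ costSet A B C D R S Q 0 := ⟨0, fun _ => 0, rfl, by simp [costFrom]⟩
      exact W_le 0 0 this
    have h2 : 0 ≤ W 0 := le_W 0 0 (fun c hc => by
      have := hlb 0 c hc; linarith)
    linarith
  -- scaling
  have smul_mem : ∀ (t : ℝ) z c, c ∈ costSet A B C D R S Q z →
      t^2 * c ∈ costSet A B C D R S Q (t • z) := by
    intro t z c hc
    obtain ⟨T, u, htraj, hcost⟩ := hc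
    refine ⟨T, fun i => t • u i, ?_, ?_⟩
    · have := trajFrom_smul A B t 0 u T
      rw [smul_zero] at this
      rw [this, htraj]
    · rw [← hcost]
      have := costFrom_smul A B C D R S Q t 0 u T
      rw [smul_zero] at this
      rw [this]
  have W_smul : ∀ (t : ℝ) z, W (t • z) = t^2 * W z := by
    intro t z
    rcases eq_or_ne t 0 with rfl | ht
    · simp [W_zero]
    · have ht2 : (0:ℝ) < t^2 := by positivity
      have le1 : ∀ (s : ℝ) (w : Fin n → ℝ), W (s • w) ≤ s^2 * W w := by
        intro s w
        rcases eq_or_ne s 0 with rfl | hs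
        · simp [W_zero]
        · have hs2 : (0:ℝ) < s^2 := by positivity
          have : W (s • w) / s^2 ≤ W w := by
            refine le_W w _ (fun c hc => ?_)
            have := W_le (s • w) _ (smul_mem s w c hc)
            rw [div_le_iff₀ hs2]
            linarith [this]
          rw [div_le_iff₀ hs2] at this
          linarith
      have h1 := le1 t z
      have h2 := le1 t⁻¹ (t • z)
      rw [smul_smul, inv_mul_cancel₀ ht, one_smul] at h2
      have : (t⁻¹)^2 = (t^2)⁻¹ := by
        field_simp
      rw [this] at h2
      have h3 : t^2 * W z ≤ W (t • z) := by
        have h4 := mul_le_mul_of_nonneg_left h2 (le_of_lt ht2)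
        rw [← mul_assoc, mul_inv_cancel₀ (ne_of_gt ht2), one_mul] at h4
        exact h4
      linarith
  -- parallelogram inequality
  have para_le : ∀ x y : Fin n → ℝ, W (x + y) + W (x - y) ≤ 2 * W x + 2 * W y := by
    intro x y
    have claim : ∀ c₁ ∈ costSet A B C D R S Q x, ∀ c₂ ∈ costSet A B C D R S Q y,
        W (x + y) + W (x - y) ≤ 2 * c₁ + 2 * c₂ := by
      intro c₁ hc₁ c₂ hc₂
      obtain ⟨T₁, u, hu, hcu⟩ := hc₁
      obtain ⟨T₂, v, hv, hcv⟩ := hc₂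
      set T := max T₁ T₂ with hT
      set u' := cat (fun _ => 0) (T - T₁) u with hu'
      set v' := cat (fun _ => 0) (T - T₂) v with hv'
      have e1 : (T - T₁) + T₁ = T := by omega
      have e2 : (T - T₂) + T₂ = T := by omega
      have htu : trajFrom A B 0 u' T = x := by
        rw [← e1, (pad_spec A B C D R S Q u T₁ (T - T₁)).1, hu]
      have htv : trajFrom A B 0 v' T = y := by
        rw [← e2, (pad_spec A B C D R S Q v T₂ (T - T₂)).1, hv]
      have hcu' : costFrom A B C D R S Q 0 u' T = c₁ := by
        rw [← e1, (pad_spec A B C D R S Q u T₁ (T - T₁)).2, hcu]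
      have hcv' : costFrom A B C D R S Q 0 v' T = c₂ := by
        rw [← e2, (pad_spec A B C D R S Q v T₂ (T - T₂)).2, hcv]
      have hta : trajFrom A B 0 (fun i => u' i + v' i) T = x + y := by
        have := trajFrom_add A B 0 0 u' v' T
        rw [add_zero] at this
        rw [this, htu, htv]
      have hts : trajFrom A B 0 (fun i => u' i - v' i) T = x - y := by
        have := trajFrom_sub A B 0 0 u' v' T
        rw [sub_zero] at this
        rw [this, htu, htv]
      have m1 := W_le (x + y) _ ⟨T, fun i => u' i + v' i, hta, rfl⟩
      have m2 := W_le (x - y) _ ⟨T, fun i => u' i - v' i, hts, rfl⟩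
      have hsum := costFrom_para A B C D R S Q 0 0 u' v' T
      rw [add_zero, sub_zero, hcu', hcv'] at hsum
      linarith
    have step1 : ∀ c₂ ∈ costSet A B C D R S Q y,
        W (x + y) + W (x - y) ≤ 2 * W x + 2 * c₂ := by
      intro c₂ hc₂
      have : (W (x + y) + W (x - y) - 2 * c₂) / 2 ≤ W x := by
        refine le_W x _ (fun c₁ hc₁ => ?_)
        have := claim c₁ hc₁ c₂ hc₂
        linarith
      linarith
    have : (W (x + y) + W (x - y) - 2 * W x) / 2 ≤ W y := by
      refine le_W y _ (fun c₂ hc₂ => ?_)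
      have := step1 c₂ hc₂
      linarith
    linarith
  have para : ∀ x y : Fin n → ℝ, W (x + y) + W (x - y) = 2 * W x + 2 * W y := by
    intro x y
    have h1 := para_le x y
    have h2 := para_le (x + y) (x - y)
    have e1 : (x + y) + (x - y) = (2:ℝ) • x := by
      rw [two_smul]; abel
    have e2 : (x + y) - (x - y) = (2:ℝ) • y := by
      rw [two_smul]; abel
    rw [e1, e2, W_smul, W_smul] at h2
    norm_num at h2
    linarith
  -- one-step dissipation inequality for W
  have W_step : ∀ (x : Fin n → ℝ) (u₀ : Fin m → ℝ),
      W (A.mulVec x + B.mulVec u₀) ≤ W x + supplyRate R S Q u₀ (C.mulVec x + D.mulVec u₀) := by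
    intro x u₀
    have key : ∀ c ∈ costSet A B C D R S Q x,
        W (A.mulVec x + B.mulVec u₀) ≤ c + supplyRate R S Q u₀ (C.mulVec x + D.mulVec u₀) := by
      intro c hc
      obtain ⟨T, u, htraj, hcost⟩ := hc
      have h1 : trajFrom A B 0 (cat u T (fun _ => u₀)) (T + 1) = A.mulVec x + B.mulVec u₀ := by
        rw [trajFrom_cat, htraj]
        exact trajFrom_succ A B x (fun _ => u₀) 0
      have h2 : costFrom A B C D R S Q 0 (cat u T (fun _ => u₀)) (T + 1)
          = c + supplyRate R S Q u₀ (C.mulVec x + D.mulVec u₀) := by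
        rw [costFrom_cat, hcost, htraj]
        congr 1
        simp [costFrom, trajFrom]
      exact W_le _ _ ⟨T + 1, _, h1, h2⟩
    have : W (A.mulVec x + B.mulVec u₀)
        - supplyRate R S Q u₀ (C.mulVec x + D.mulVec u₀) ≤ W x := by
      refine le_W x _ (fun c hc => ?_)
      have := key c hc
      linarith
    linarith
  -- continuous two-sided bounds
  set FU : (Fin n → ℝ) → ℝ := fun z => costFrom A B C D R S Q 0 (inputOf (g z)) n with hFU
  set FL : (Fin n → ℝ) → ℝ :=
    fun z => costFrom A B C D R S Q z (inputOf (g (-(A ^ n).mulVec z))) n with hFL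
  have hWub : ∀ z, W z ≤ FU z := by
    intro z
    refine W_le z _ ⟨n, inputOf (g z), ?_, rfl⟩
    rw [trajFrom_inputOf, hg]
  have hWlb : ∀ z, -FL z ≤ W z := by
    intro z
    refine le_W z _ (fun c hc => ?_)
    obtain ⟨T, u, htraj, hcost⟩ := hc
    have hreach : trajFrom A B z (inputOf (g (-(A ^ n).mulVec z))) n = 0 := by
      rw [trajFrom_state_split, trajFrom_inputOf, hg]
      abel
    have hmem0 : costFrom A B C D R S Q 0 (cat u T (inputOf (g (-(A ^ n).mulVec z)))) (T + n)
        ∈ costSet A B C D R S Q 0 := by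
      refine ⟨T + n, _, ?_, rfl⟩
      rw [trajFrom_cat, htraj, hreach]
    have h0le : (0:ℝ) ≤ costFrom A B C D R S Q 0
        (cat u T (inputOf (g (-(A ^ n).mulVec z)))) (T + n) := by
      have := hlb 0 _ hmem0
      linarith
    rw [costFrom_cat, htraj, hcost] at h0le
    simp only [hFL]
    linarith
  have hgcont : Continuous fun z : Fin n → ℝ => g z := g.continuous_of_finiteDimensional
  have hinputcont : ∀ (f : (Fin n → ℝ) → (Fin n → ℝ)), Continuous f →
      ∀ i, Continuous fun z => inputOf (g (f z)) i := by
    intro f hf i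
    refine continuous_pi fun k => ?_
    simp only [inputOf]
    by_cases hi : i < n
    · simp only [dif_pos hi]
      exact (continuous_apply _).comp (hgcont.comp hf)
    · simp only [dif_neg hi]
      exact continuous_const
  have hFUc : Continuous FU := by
    rw [hFU]
    exact continuous_costFrom A B C D R S Q continuous_const
      (hinputcont (fun z => z) continuous_id) n
  have hFLc : Continuous FL := by
    rw [hFL]
    exact continuous_costFrom A B C D R S Q continuous_id
      (hinputcont (fun z => -(A ^ n).mulVec z)
        ((continuous_mulVec (A ^ n) continuous_id).neg)) n
  have habsW : ∀ z, |W z| ≤ |FU z| + |FL z| := by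
    intro z
    rw [abs_le]
    constructor
    · have h1 := hWlb z
      have h2 : -FL z ≥ -|FL z| := neg_le_neg (le_abs_self _)
      have h3 : (0:ℝ) ≤ |FU z| := abs_nonneg _
      linarith
    · have h1 := hWub z
      have h2 : FU z ≤ |FU z| := le_abs_self _
      have h3 : (0:ℝ) ≤ |FL z| := abs_nonneg _
      linarith
  -- scalar quadratic expansion of W along lines
  have hWlin : ∀ x y : Fin n → ℝ, ∀ lam : ℝ,
      W (lam • x + y) = lam^2 * W x + lam * (W (x + y) - W x - W y) + W y := by
    intro x y
    obtain ⟨φ, hφ⟩ : ∃ φ : ℝ → ℝ, φ = fun lam => W (lam • x + y) - lam^2 * W x - W y :=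
      ⟨_, rfl⟩
    have hmid : ∀ a b : ℝ, 4 * φ ((a+b)/2) = 2 * φ a + 2 * φ b := by
      intro a b
      have hp := para (a • x + y) (b • x + y)
      have e1 : (a • x + y) + (b • x + y) = (2:ℝ) • (((a+b)/2) • x + y) := by
        rw [smul_add, smul_smul]
        rw [show (2:ℝ) * ((a+b)/2) = a + b by ring, add_smul, two_smul]
        abel
      have e2 : (a • x + y) - (b • x + y) = (a - b) • x := by
        rw [sub_smul]; abel
      rw [e1, e2, W_smul, W_smul] at hp
      simp only [hφ]
      linear_combination hp
    have hφ0 : φ 0 = 0 := by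
      simp only [hφ]
      rw [zero_smul, zero_add]
      ring
    have hhalf : ∀ a, φ (a/2) = φ a / 2 := by
      intro a
      have h := hmid a 0
      rw [hφ0] at h
      rw [show (a + 0)/2 = a/2 by ring] at h
      linarith
    have hadd : ∀ a b, φ (a + b) = φ a + φ b := by
      intro a b
      have h1 := hmid a b
      rw [hhalf (a+b)] at h1
      linarith
    have hline : Continuous fun lam : ℝ => lam • x + y :=
      (continuous_id.smul continuous_const).add continuous_const
    have hFc : Continuous fun lam : ℝ =>
        |FU (lam • x + y)| + |FL (lam • x + y)| + |W x| + |W y| :=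
      ((((hFUc.comp hline).abs.add (hFLc.comp hline).abs)).add continuous_const).add
        continuous_const
    obtain ⟨Mb, hMb⟩ := (isCompact_Icc : IsCompact (Set.Icc (-1:ℝ) 1)).exists_bound_of_continuousOn
      hFc.continuousOn
    have hbound : ∀ t : ℝ, |t| ≤ 1 → |φ t| ≤ Mb := by
      intro t ht
      have hmem : t ∈ Set.Icc (-1:ℝ) 1 := by
        rw [Set.mem_Icc]; rw [abs_le] at ht; exact ht
      have hM := hMb t hmem
      rw [Real.norm_eq_abs] at hM
      have hFnn : (0:ℝ) ≤ |FU (t • x + y)| + |FL (t • x + y)| + |W x| + |W y| := by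
        positivity
      rw [abs_of_nonneg hFnn] at hM
      have h1 : |φ t| ≤ |W (t • x + y)| + t^2 * |W x| + |W y| := by
        simp only [hφ]
        have := abs_sub (W (t • x + y) - t^2 * W x) (W y)
        calc |W (t • x + y) - t^2 * W x - W y|
            ≤ |W (t • x + y) - t^2 * W x| + |W y| := abs_sub _ _
          _ ≤ |W (t • x + y)| + |t^2 * W x| + |W y| := by
              have := abs_sub (W (t • x + y)) (t^2 * W x)
              linarith
          _ = |W (t • x + y)| + t^2 * |W x| + |W y| := by
              rw [abs_mul, abs_of_nonneg (sq_nonneg t)]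
      have h2 : t^2 * |W x| ≤ |W x| := by
        have ht2 : t^2 ≤ 1 := by nlinarith [abs_nonneg t, sq_abs t]
        nlinarith [abs_nonneg (W x)]
      have h3 := habsW (t • x + y)
      linarith
    have hφlin := additive_bounded_linear φ hadd Mb hbound
    intro lam
    have h := hφlin lam
    have hφ1 : φ 1 = W (x + y) - W x - W y := by
      simp only [hφ]
      rw [one_smul]
      ring
    rw [hφ1] at h
    simp only [hφ] at h
    linarith [h]
  -- the bilinear form
  obtain ⟨β, hβ⟩ : ∃ β : (Fin n → ℝ) → (Fin n → ℝ) → ℝ,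
      β = fun v w => (W (v + w) - W v - W w) / 2 := ⟨_, rfl⟩
  have βsymm : ∀ v w, β v w = β w v := by
    intro v w; simp only [hβ]; rw [add_comm]; ring
  have βdiag : ∀ v, β v v = W v := by
    intro v
    simp only [hβ]
    rw [show v + v = (2:ℝ) • v by rw [two_smul], W_smul]
    ring
  have βaddl : ∀ v v' w, β (v + v') w = β v w + β v' w := by
    intro x' y' w'
    have e1 := para (x' + w') y'
    have e2 := para w' (x' - y')
    have e3 := para (y' + w') x'
    have e4 := para x' y'
    have a1 : (x' + w') + y' = x' + y' + w' := by abel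
    have a2 : (x' + w') - y' = x' - y' + w' := by abel
    have a3 : w' + (x' - y') = x' - y' + w' := by abel
    have a4 : w' - (x' - y') = y' - x' + w' := by abel
    have a5 : (y' + w') + x' = x' + y' + w' := by abel
    have a6 : (y' + w') - x' = y' - x' + w' := by abel
    rw [a1, a2] at e1
    rw [a3, a4] at e2
    rw [a5, a6] at e3
    simp only [hβ]
    linarith
  have βsmull : ∀ (t : ℝ) v w, β (t • v) w = t * β v w := by
    intro t v w
    have h1 := hWlin v w t
    simp only [hβ]
    rw [W_smul]
    linear_combination h1 / 2
  have βzerol : ∀ w, β 0 w = 0 := by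
    intro w
    have h := βaddl 0 0 w
    rw [add_zero] at h
    linarith
  have βsuml : ∀ (w : Fin n → ℝ) (f : Fin n → (Fin n → ℝ)) (s : Finset (Fin n)),
      β (∑ i ∈ s, f i) w = ∑ i ∈ s, β (f i) w := by
    intro w f s
    induction s using Finset.induction with
    | empty => simpa using βzerol w
    | insert _ _ hni ih => rw [Finset.sum_insert hni, βaddl, ih, Finset.sum_insert hni]
  have hrepr : ∀ v : Fin n → ℝ, v = ∑ i, v i • (Pi.single i 1 : Fin n → ℝ) := by
    intro v
    funext j
    rw [Finset.sum_apply]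
    simp [Pi.single_apply]
  refine ⟨Matrix.of fun i j => β (Pi.single i 1) (Pi.single j 1), ?_, ?_⟩
  · rw [Matrix.IsSymm]
    ext i j
    rw [Matrix.transpose_apply]
    simp only [Matrix.of_apply]
    exact βsymm _ _
  · have βexpand : ∀ v w : Fin n → ℝ,
        β v w = v ⬝ᵥ (Matrix.of fun i j => β (Pi.single i 1) (Pi.single j 1)).mulVec w := by
      intro v w
      have step1 : β v w = ∑ i, v i * β (Pi.single i 1) w := by
        conv_lhs => rw [hrepr v]
        rw [βsuml]
        refine Finset.sum_congr rfl fun i _ => βsmull (v i) _ w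
      have step2 : ∀ i, β (Pi.single i 1 : Fin n → ℝ) w
          = ∑ j, w j * β (Pi.single i 1) (Pi.single j 1) := by
        intro i
        rw [βsymm]
        conv_lhs => rw [hrepr w]
        rw [βsuml]
        refine Finset.sum_congr rfl fun j _ => ?_
        rw [βsmull, βsymm]
      rw [step1]
      have hmid2 : ∀ i, v i * β (Pi.single i 1) w
          = v i * ∑ j, w j * β (Pi.single i 1) (Pi.single j 1) := fun i => by rw [step2]
      rw [Finset.sum_congr rfl fun i _ => hmid2 i]
      simp only [Matrix.mulVec, dotProduct, Matrix.of_apply, Finset.mul_sum]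
      refine Finset.sum_congr rfl fun i _ => Finset.sum_congr rfl fun j _ => by ring
    intro x u₀
    rw [← βexpand, ← βexpand, βdiag, βdiag]
    exact W_step x u₀

end DissipProof

namespace DissipProof

lemma dot_triple {k k' N : ℕ} (E : Matrix (Fin k) (Fin N) ℝ) (F : Matrix (Fin k) (Fin k') ℝ)
    (G : Matrix (Fin k') (Fin N) ℝ) (z z' : Fin N → ℝ) :
    z ⬝ᵥ (Eᵀ * F * G).mulVec z' = E.mulVec z ⬝ᵥ F.mulVec (G.mulVec z') := by
  rw [Matrix.mul_assoc, ← Matrix.mulVec_mulVec, dotProduct_mulVec,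
    Matrix.vecMul_transpose, ← Matrix.mulVec_mulVec]

end DissipProof


theorem dissipative_implies_dataMatrix_lmi_feasible {n m p N : ℕ}
    (A : Matrix (Fin n) (Fin n) ℝ) (B : Matrix (Fin n) (Fin m) ℝ)
    (C : Matrix (Fin p) (Fin n) ℝ) (D : Matrix (Fin p) (Fin m) ℝ)
    (R : Matrix (Fin m) (Fin m) ℝ) (S : Matrix (Fin p) (Fin m) ℝ)
    (Q : Matrix (Fin p) (Fin p) ℝ) (hR : R.IsSymm) (hQ : Q.IsSymm)
    (X Xp : Matrix (Fin n) (Fin N) ℝ) (U : Matrix (Fin m) (Fin N) ℝ)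
    (hctrb : (controllabilityMatrix A B).rank = n)
    (hdata : Xp = A * X + B * U)
    (hdiss : ∃ V : (Fin n → ℝ) → ℝ,
      ∀ (u : ℕ → Fin m → ℝ) (x : ℕ → Fin n → ℝ),
        (∀ k : ℕ, x (k + 1) = A.mulVec (x k) + B.mulVec (u k)) →
        ∀ k₂ k₁ : ℕ, k₂ < k₁ →
          V (x k₁) - V (x k₂)
            ≤ ∑ i ∈ Finset.Ico k₂ k₁,
                supplyRate R S Q (u i) (C.mulVec (x i) + D.mulVec (u i))) :
    ∃ P : Matrix (Fin n) (Fin n) ℝ, P.IsSymm ∧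
      (dataMatrixM C D R S Q X Xp U P).NegSemidef := by
  obtain ⟨V, hV⟩ := hdiss
  obtain ⟨P, hPs, hPstep⟩ := DissipProof.exists_storage_matrix A B C D R S Q hctrb V hV
  refine ⟨P, hPs, ?_⟩
  rw [Matrix.IsSymm] at hPs hR hQ
  have hsym : (dataMatrixM C D R S Q X Xp U P)ᵀ = dataMatrixM C D R S Q X Xp U P := by
    simp only [dataMatrixM, Matrix.transpose_sub, Matrix.transpose_add, Matrix.transpose_mul,
      Matrix.transpose_transpose, hPs, hR, hQ, Matrix.mul_assoc]
    abel
  apply Matrix.PosSemidef.of_dotProduct_mulVec_nonneg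
  · show (-(dataMatrixM C D R S Q X Xp U P))ᴴ = _
    rw [Matrix.conjTranspose_eq_transpose_of_trivial, Matrix.transpose_neg, hsym]
  · intro z
    rw [star_trivial, Matrix.neg_mulVec, dotProduct_neg]
    have hquad : z ⬝ᵥ (dataMatrixM C D R S Q X Xp U P).mulVec z
        = (Xp.mulVec z) ⬝ᵥ P.mulVec (Xp.mulVec z)
          - (X.mulVec z) ⬝ᵥ P.mulVec (X.mulVec z)
          - supplyRate R S Q (U.mulVec z)
              (C.mulVec (X.mulVec z) + D.mulVec (U.mulVec z)) := by
      have hY : (C * X + D * U).mulVec z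
          = C.mulVec (X.mulVec z) + D.mulVec (U.mulVec z) := by
        rw [Matrix.add_mulVec, Matrix.mulVec_mulVec, Matrix.mulVec_mulVec]
      simp only [dataMatrixM, Matrix.sub_mulVec, Matrix.add_mulVec,
        dotProduct_sub, dotProduct_add]
      rw [DissipProof.dot_triple Xp P Xp, DissipProof.dot_triple X P X,
        DissipProof.dot_triple U R U, DissipProof.dot_triple U Sᵀ (C * X + D * U),
        DissipProof.dot_triple (C * X + D * U) S U,
        DissipProof.dot_triple (C * X + D * U) Q (C * X + D * U), hY]
      simp only [supplyRate]
      try ring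
    rw [hquad]
    have hXp : Xp.mulVec z = A.mulVec (X.mulVec z) + B.mulVec (U.mulVec z) := by
      rw [hdata, Matrix.add_mulVec, Matrix.mulVec_mulVec, Matrix.mulVec_mulVec]
    rw [hXp]
    have := hPstep (X.mulVec z) (U.mulVec z)
    linarith
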